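/- Let R be an s-unital ring. Then: (i) if R is properly purely infinite, then R is purely infinite; (ii) if the 2×2 matrix ring M₂(R) is purely infinite, then R is properly purely infinite. -/

import Mathlib

/-- `x ≼ y` for square matrices over a (possibly nonunital) ring: `x = α * y * β`
for some rectangular matrices `α`, `β`. -/
def MatSub {R : Type*} [NonUnitalRing R] {k n : ℕ}
    (x : Matrix (Fin k) (Fin k) R) (y : Matrix (Fin n) (Fin n) R) : Prop :=
  ∃ (α : Matrix (Fin k) (Fin n) R) (β : Matrix (Fin n) (Fin k) R), x = α * y * β

/-- `a ⊕ b ≼ c` for ring elements: the block-diagonal matrix `diag(a, b)` satisfies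
`diag(a,b) ≼ (c)` as square matrices. -/
def PairSub {R : Type*} [NonUnitalRing R] (a b c : R) : Prop :=
  MatSub !![a, 0; 0, b] !![c]

/-- `a ≼ b` for ring elements: `a = α * b * β` for some ring elements. -/
def ElemSub {R : Type*} [NonUnitalRing R] (a b : R) : Prop :=
  ∃ α β : R, a = α * b * β

/-- `K(a) = { x | a ⊕ x ≼ a }`. -/
def KSet {R : Type*} [NonUnitalRing R] (a : R) : Set R := { x | PairSub a x a }

/-- An element `a` is infinite if `a ⊕ x ≼ a` for some nonzero `x`, i.e. `K(a) ≠ 0`. -/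
def IsInfiniteElem {R : Type*} [NonUnitalRing R] (a : R) : Prop :=
  ∃ x : R, x ≠ 0 ∧ PairSub a x a

/-- An element `a` is properly infinite if `a ≠ 0` and `a ⊕ a ≼ a`. -/
def IsProperlyInfiniteElem {R : Type*} [NonUnitalRing R] (a : R) : Prop :=
  a ≠ 0 ∧ PairSub a a a

/-- A ring is s-unital if each element `x` admits `u, v` with `u * x = x` and `x * v = x`. -/
def IsSUnitalRing (R : Type*) [NonUnitalRing R] : Prop :=
  ∀ x : R, (∃ u : R, u * x = x) ∧ (∃ v : R, x * v = x)

/-- `b` belongs to `RaR`, the set of finite sums `Σ xᵢ * a * yᵢ`. -/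
def MemRaR {R : Type*} [NonUnitalRing R] (a b : R) : Prop :=
  ∃ (n : ℕ) (x y : Fin n → R), b = ∑ i, x i * a * y i

/-- A (possibly nonunital) ring is a division ring: it has a nonzero multiplicative identity
with respect to which every nonzero element is two-sided invertible. -/
def IsDivisionRingPred (R : Type*) [NonUnitalRing R] : Prop :=
  ∃ u : R, u ≠ 0 ∧ (∀ x : R, u * x = x ∧ x * u = x) ∧
    ∀ x : R, x ≠ 0 → ∃ y : R, x * y = u ∧ y * x = u

/-- A ring `R` is purely infinite if no quotient of `R` by a two-sided ideal is a division
ring, and `b ∈ RaR` implies `b = x * a * y` for some `x, y ∈ R`. -/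
def IsPurelyInfiniteRing (R : Type*) [NonUnitalRing R] : Prop :=
  (∀ I : TwoSidedIdeal R, ¬ IsDivisionRingPred I.ringCon.Quotient) ∧
  ∀ a b : R, MemRaR a b → ElemSub b a

/-- A ring is properly purely infinite if every nonzero element is properly infinite. -/
def IsProperlyPurelyInfiniteRing (R : Type*) [NonUnitalRing R] : Prop :=
  ∀ a : R, a ≠ 0 → IsProperlyInfiniteElem a

/-- An idempotent `e` is infinite if `e ∼ f ≤ e` for some idempotent `f ≠ e`. -/
def IsInfiniteIdem {R : Type*} [NonUnitalRing R] (e : R) : Prop :=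
  IsIdempotentElem e ∧ ∃ f : R, IsIdempotentElem f ∧ (∃ x y : R, e = x * y ∧ f = y * x) ∧
    e * f = f ∧ f * e = f ∧ f ≠ e

/-- An exchange ring: for each `x` there are an idempotent `e` and elements `r, s` with
`e = x * r = x + s - x * s`. -/
def IsExchangeRing (R : Type*) [NonUnitalRing R] : Prop :=
  ∀ x : R, ∃ e r s : R, IsIdempotentElem e ∧ e = x * r ∧ e = x + s - x * s

/-- A ring has local units if every finite subset is contained in a corner `eRe`
for some idempotent `e`. -/
def HasLocalUnits (R : Type*) [NonUnitalRing R] : Prop :=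
  ∀ s : Finset R, ∃ e : R, IsIdempotentElem e ∧ ∀ x ∈ s, ∃ r : R, x = e * r * e

lemma pairSub_iff {R : Type*} [NonUnitalRing R] (a b c : R) :
    PairSub a b c ↔
    ∃ s₁ s₂ t₁ t₂ : R, s₁ * c * t₁ = a ∧ s₁ * c * t₂ = 0 ∧ s₂ * c * t₁ = 0 ∧ s₂ * c * t₂ = b := by
  constructor
  · rintro ⟨α, β, h⟩
    refine ⟨α 0 0, α 1 0, β 0 0, β 0 1, ?_, ?_, ?_, ?_⟩ <;>
    · have := fun i j => congrFun (congrFun h i) j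
      simp [Matrix.mul_apply, Fin.sum_univ_succ] at this; grind
  · rintro ⟨s₁, s₂, t₁, t₂, h1, h2, h3, h4⟩
    refine ⟨!![s₁; s₂], !![t₁, t₂], ?_⟩
    ext i j
    fin_cases i <;> fin_cases j <;>
      simp [Matrix.mul_apply, Fin.sum_univ_succ, h1, h2, h3, h4]

/-- From `a ⊕ a ≼ a` we get an `n × n` "diagonal" system of matrix units for `a`. -/
lemma diag_system {R : Type*} [NonUnitalRing R] {a s₁ s₂ t₁ t₂ : R}
    (h1 : s₁ * a * t₁ = a) (h2 : s₁ * a * t₂ = 0) (h3 : s₂ * a * t₁ = 0)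
    (h4 : s₂ * a * t₂ = a) (n : ℕ) :
    ∃ u v : Fin n → R, ∀ i j, u i * a * v j = if i = j then a else 0 := by
  induction n with
  | zero => exact ⟨fun i => 0, fun i => 0, fun i => i.elim0⟩
  | succ n ih =>
    obtain ⟨u, v, huv⟩ := ih
    refine ⟨Fin.snoc (fun i => u i * s₁) s₂, Fin.snoc (fun j => t₁ * v j) t₂, ?_⟩
    intro i j
    refine Fin.lastCases ?_ (fun i' => ?_) i <;> refine Fin.lastCases ?_ (fun j' => ?_) j
    · simp [Fin.snoc_last, h4]
    · have : s₂ * a * (t₁ * v j') = (s₂ * a * t₁) * v j' := by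
        rw [mul_assoc (s₂ * a) t₁ (v j')]
      simp [Fin.snoc_last, Fin.snoc_castSucc, this, h3, (Fin.castSucc_lt_last j').ne']
    · have : (u i' * s₁) * a * t₂ = u i' * (s₁ * a * t₂) := by
        rw [mul_assoc (u i') s₁ a, mul_assoc (u i') (s₁ * a) t₂]
      simp [Fin.snoc_last, Fin.snoc_castSucc, this, h2, (Fin.castSucc_lt_last i').ne]
    · have : (u i' * s₁) * a * (t₁ * v j') = u i' * a * v j' := by
        rw [mul_assoc (u i') s₁ a, ← mul_assoc (u i' * (s₁ * a)) t₁ (v j'),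
          mul_assoc (u i') (s₁ * a) t₁, h1]
      simp [Fin.snoc_castSucc, this, huv i' j', Fin.castSucc_inj]
  
theorem properlyPurelyInfinite_implies_purelyInfinite_and_matrix_converse
    {R : Type*} [NonUnitalRing R] (hR : IsSUnitalRing R) :
    (IsProperlyPurelyInfiniteRing R → IsPurelyInfiniteRing R) ∧
    (IsPurelyInfiniteRing (Matrix (Fin 2) (Fin 2) R) → IsProperlyPurelyInfiniteRing R) := by
  constructor
  · intro hP
    constructor
    · -- no quotient is a division ring
      rintro I ⟨q, hq0, hunit, hinv⟩
      obtain ⟨u, rfl⟩ := Quotient.exists_rep q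
      have hu : (u : R) ≠ 0 := by rintro rfl; exact hq0 rfl
      obtain ⟨-, hps⟩ := hP u hu
      rw [pairSub_iff] at hps
      obtain ⟨s₁, s₂, t₁, t₂, h1, h2, h3, h4⟩ := hps
      set c := I.ringCon
      -- push to the quotient
      have H1 : (s₁ : c.Quotient) * u * t₁ = u := congrArg _ h1
      have H2 : (s₁ : c.Quotient) * u * t₂ = 0 := congrArg _ h2
      have H4 : (s₂ : c.Quotient) * u * t₂ = u := congrArg _ h4
      -- s₁ ≠ 0
      have hs1 : (s₁ : c.Quotient) ≠ 0 := by
        intro h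
        rw [h, zero_mul, zero_mul] at H1
        exact hq0 H1.symm
      obtain ⟨y, -, hy2⟩ := hinv _ hs1
      have hst : (s₁ : c.Quotient) * t₂ = 0 := by
        have h := H2
        rwa [mul_assoc, (show (u : c.Quotient) * t₂ = t₂ from (hunit _).1)] at h
      have ht2 : (t₂ : c.Quotient) = 0 := by
        have h : (t₂ : c.Quotient) = y * ((s₁ : c.Quotient) * t₂) := by
          rw [← mul_assoc, hy2]
          exact ((hunit _).1).symm
        rw [h, hst, mul_zero]
      rw [ht2, mul_zero] at H4
      exact hq0 H4.symm
    · -- RaR condition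
      intro a b hb
      obtain ⟨n, x, y, rfl⟩ := hb
      by_cases ha : a = 0
      · refine ⟨0, 0, ?_⟩
        simp [ha]
      obtain ⟨-, hps⟩ := hP a ha
      rw [pairSub_iff] at hps
      obtain ⟨s₁, s₂, t₁, t₂, h1, h2, h3, h4⟩ := hps
      obtain ⟨u, v, huv⟩ := diag_system h1 h2 h3 h4 n
      refine ⟨∑ i, x i * u i, ∑ j, v j * y j, ?_⟩
      have rearr : ∀ p q w z : R, p * q * a * (w * z) = p * ((q * a * w) * z) := by
        intro p q w z
        rw [mul_assoc p q a, ← mul_assoc (p * (q * a)) w z, mul_assoc p (q * a) w,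
          mul_assoc p ((q * a) * w) z]
      conv_rhs => rw [Finset.mul_sum]
      simp_rw [Finset.sum_mul, rearr, huv]
      simp [ite_mul, zero_mul, Finset.sum_ite_eq', mul_assoc]
  · -- M₂(R) purely infinite → R properly purely infinite
    intro hM a ha
    obtain ⟨u, hu⟩ := (hR a).1
    obtain ⟨v, hv⟩ := (hR a).2
    set A : Matrix (Fin 2) (Fin 2) R := !![a, 0; 0, 0] with hA
    have hmem : MemRaR A !![a, 0; 0, a] := by
      refine ⟨2, ![!![u, 0; 0, 0], !![0, 0; u, 0]], ![!![v, 0; 0, 0], !![0, v; 0, 0]], ?_⟩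
      rw [Fin.sum_univ_two]
      ext i j
      fin_cases i <;> fin_cases j <;>
        simp [hA, Matrix.mul_apply, Fin.sum_univ_succ, hu, hv,
          mul_assoc, (by rw [← mul_assoc, hu] : u * (a * v) = a * v)]
    obtain ⟨X, Y, hXY⟩ := hM.2 A !![a, 0; 0, a] hmem
    refine ⟨ha, ?_⟩
    rw [pairSub_iff]
    refine ⟨X 0 0, X 1 0, Y 0 0, Y 0 1, ?_, ?_, ?_, ?_⟩ <;>
    · have := fun i j => congrFun (congrFun hXY i) j
      simp [hA, Matrix.mul_apply, Fin.sum_univ_succ] at this; grind
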